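/- Let (M, ω) be a compact symplectic manifold of dimension 2n which is s-Lefschetz, i.e. the map Lⁿ⁻ᵏ : Hᵏ(M) → H^{2n-k}(M), a ↦ a ∪ [ω]^{n-k}, is surjective for all k ≤ s. Then for every odd integer 2i−1 ≤ s, the Betti number b_{2i−1}(M) = dim H^{2i−1}(M) is even. -/

import Mathlib

lemma even_finrank_of_skew_nondeg {W : Type*} [AddCommGroup W] [Module ℝ W]
    [FiniteDimensional ℝ W]
    (B : W →ₗ[ℝ] W →ₗ[ℝ] ℝ) (hB : ∀ x y, B x y = - B y x)
    (hnd : LinearMap.BilinForm.Nondegenerate B) :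
    Even (Module.finrank ℝ W) := by
  by_contra h
  rw [Nat.not_even_iff_odd] at h
  let b := Module.finBasis ℝ W
  have hdet := (LinearMap.BilinForm.nondegenerate_iff_det_ne_zero b).mp hnd
  set M := LinearMap.BilinForm.toMatrix b B with hM
  have hskew : M.transpose = -M := by
    ext i j
    simp only [Matrix.transpose_apply, Matrix.neg_apply, hM,
      LinearMap.BilinForm.toMatrix_apply]
    exact hB (b j) (b i)
  have : M.det = - M.det := by
    conv_lhs => rw [← Matrix.det_transpose, hskew]
    rw [Matrix.det_neg]
    simp [Odd.neg_one_pow h]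
  have : M.det = 0 := by linarith
  exact hdet this

theorem odd_betti_even_of_sLefschetz
    {V : Type*} [AddCommGroup V] [Module ℝ V] [FiniteDimensional ℝ V]
    (n s : ℕ) (hs : s ≤ n - 1)
    (H : ℕ → Submodule ℝ V)
    (f : V →ₗ[ℝ] V)
    (hgr : ∀ k, Submodule.map f (H k) ≤ H (k + 2))
    (p : V →ₗ[ℝ] V →ₗ[ℝ] ℝ)
    (hnd : ∀ k, k ≤ 2 * n → ∀ x ∈ H k, (∀ y ∈ H (2 * n - k), p x y = 0) → x = 0)
    (hskew : ∀ k, Odd k → ∀ x ∈ H k, ∀ y ∈ H k,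
      p x ((f ^ (n - k)) y) = - p y ((f ^ (n - k)) x))
    (hlef : ∀ k, k ≤ s → H (2 * n - k) ≤ Submodule.map (f ^ (n - k)) (H k)) :
    ∀ i : ℕ, 1 ≤ i → 2 * i - 1 ≤ s → Even (Module.finrank ℝ ↥(H (2 * i - 1))) := by
  intro i hi hks
  set k := 2 * i - 1 with hk
  have hodd : Odd k := by
    refine ⟨i - 1, ?_⟩
    omega
  have hk2n : k ≤ 2 * n := by omega
  let W := H k
  let B : W →ₗ[ℝ] W →ₗ[ℝ] ℝ :=
    LinearMap.compl₁₂ p W.subtype ((f ^ (n - k)) ∘ₗ W.subtype)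
  have hBapp : ∀ x y : W, B x y = p x ((f ^ (n - k)) y) := fun x y => rfl
  have hBskew : ∀ x y : W, B x y = - B y x := by
    intro x y
    rw [hBapp, hBapp]
    exact hskew k hodd x x.2 y y.2
  have hBnd : LinearMap.BilinForm.Nondegenerate B := by
    refine LinearMap.BilinForm.Nondegenerate.ofSeparatingLeft ?_
    intro x hx
    have : (x : V) = 0 := by
      apply hnd k hk2n x x.2
      intro y hy
      obtain ⟨z, hz, rfl⟩ := hlef k hks hy
      exact hx ⟨z, hz⟩
    exact Subtype.ext this
  exact even_finrank_of_skew_nondeg B hBskew hBnd
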